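/- Let α, λ, μ be rational numbers and set x = −4α − 9λ + 5μ. Let P be the 7×7 matrix over ℚ whose entries are: P(i,i) = x + 5α for 1 ≤ i ≤ 6; P(i,j) = x for 1 ≤ i,j ≤ 6 with i ≠ j; P(i,7) = −5(x + α) for 1 ≤ i ≤ 6; P(7,j) = x + 5α for 1 ≤ j ≤ 6; and P(7,7) = −5(x + 4α). Then det P = −(5α)^6 · (18α + 63λ − 35μ). -/

import Mathlib

open Matrix Fin in
set_option maxRecDepth 100000 in
lemma detB (p z w q r u : ℚ) :
    Matrix.det ((Matrix.of fun i j : Fin 7 =>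
      if i.val = 0 then (if j.val = 0 then p else if j.val = 6 then w else z)
      else if i.val = 6 then (if j.val = 0 then r else if j.val = 6 then u else 0)
      else if j.val = i.val then q else 0).submatrix (Fin.succAbove 6) Fin.succ)
      = -(q^5*w) := by
  rw [Matrix.det_succ_column _ 5, Fin.sum_univ_six]
  simp (config := { decide := true }) only [Fin.isValue, Matrix.submatrix_apply, Matrix.of_apply]
  norm_num [show ((1:Fin 6):ℕ)=1 from rfl, show ((2:Fin 6):ℕ)=2 from rfl,
    show ((3:Fin 6):ℕ)=3 from rfl, show ((4:Fin 6):ℕ)=4 from rfl, show ((5:Fin 6):ℕ)=5 from rfl,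
    show (Fin.succAbove 6 0 : Fin 7).val = 0 from rfl, show (Fin.succAbove 6 1 : Fin 7).val = 1 from rfl,
    show (Fin.succAbove 6 2 : Fin 7).val = 2 from rfl, show (Fin.succAbove 6 3 : Fin 7).val = 3 from rfl,
    show (Fin.succAbove 6 4 : Fin 7).val = 4 from rfl, show (Fin.succAbove 6 5 : Fin 7).val = 5 from rfl,
    show ((Fin.succ 5 : Fin 7)).val = 6 from rfl]
  have hC : ((Matrix.of fun i j : Fin 7 =>
      if i.val = 0 then (if j.val = 0 then p else if j.val = 6 then w else z)
      else if i.val = 6 then (if j.val = 0 then r else if j.val = 6 then u else 0)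
      else if j.val = i.val then q else 0).submatrix
        (Fin.succAbove 6 ∘ Fin.succ) (Fin.succ ∘ Fin.succAbove 5))
      = Matrix.diagonal ![q,q,q,q,q] := by
    ext i j
    fin_cases i <;> fin_cases j <;> simp (config := { decide := true }) [Matrix.diagonal, Fin.succAbove]
  simp only [Fin.val_eq_zero_iff] at hC
  rw [hC, Matrix.det_diagonal]
  norm_num [Fin.prod_univ_succ]
  ring

open Matrix Fin in
set_option maxRecDepth 100000 in
lemma detG (p z w q r u : ℚ) :
    Matrix.det (Matrix.of fun i j : Fin 7 =>
      if i.val = 0 then (if j.val = 0 then p else if j.val = 6 then w else z)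
      else if i.val = 6 then (if j.val = 0 then r else if j.val = 6 then u else 0)
      else if j.val = i.val then q else 0) = p*q^5*u - r*q^5*w := by
  have hA : ((Matrix.of fun i j : Fin 7 =>
      if i.val = 0 then (if j.val = 0 then p else if j.val = 6 then w else z)
      else if i.val = 6 then (if j.val = 0 then r else if j.val = 6 then u else 0)
      else if j.val = i.val then q else 0).submatrix Fin.succ Fin.succ)
      = Matrix.diagonal ![q,q,q,q,q,u] := by
    ext i j
    fin_cases i <;> fin_cases j <;>
      simp (config := { decide := true }) [Matrix.diagonal, show (![q,q,q,q,q,u] : Fin 6 → ℚ) 5 = u from rfl]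
  simp only [Fin.val_eq_zero_iff] at hA
  have hB := detB p z w q r u
  simp only [Fin.val_eq_zero_iff] at hB
  rw [Matrix.det_succ_column_zero, Fin.sum_univ_seven]
  norm_num (config := { decide := true }) [show ((1:Fin 7):ℕ)=1 from rfl, show ((2:Fin 7):ℕ)=2 from rfl,
    show ((3:Fin 7):ℕ)=3 from rfl, show ((4:Fin 7):ℕ)=4 from rfl,
    show ((5:Fin 7):ℕ)=5 from rfl, show ((6:Fin 7):ℕ)=6 from rfl,
    hA, hB, Matrix.det_diagonal, Fin.prod_univ_succ]
  ring

open Matrix Fin in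
set_option maxHeartbeats 2000000 in
set_option maxRecDepth 100000 in
lemma reduceM (y z w v : ℚ) :
    Matrix.det (Matrix.of fun i j : Fin 7 =>
        if i.val < 6 then
          (if j.val < 6 then (if i = j then y else z) else w)
        else
          (if j.val < 6 then y else v)) =
      (y+5*z)*(y-z)^5*(v-w) - (5*(y-z))*(y-z)^5*w := by
  set E1 : Matrix (Fin 7) (Fin 7) ℚ := Matrix.of fun i j : Fin 7 =>
      if i.val = 0 then (if j.val = 0 then y else if j.val = 6 then w else z)
      else if i.val = 6 then (if j.val = 0 then 0 else if j.val = 6 then v - w else y - z)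
      else (if j.val = 0 then z - y else if j.val = i.val then y - z else 0) with hE1
  set E2 : Matrix (Fin 7) (Fin 7) ℚ := Matrix.of fun i j : Fin 7 =>
      if i.val = 0 then (if j.val = 0 then y else if j.val = 6 then w else z)
      else if i.val = 6 then (if j.val = 0 then 5*(y-z) else if j.val = 6 then v - w else 0)
      else (if j.val = 0 then z - y else if j.val = i.val then y - z else 0) with hE2
  have h1 : Matrix.det (Matrix.of fun i j : Fin 7 =>
        if i.val < 6 then
          (if j.val < 6 then (if i = j then y else z) else w)
        else
          (if j.val < 6 then y else v)) = E1.det := by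
    apply Matrix.det_eq_of_forall_row_eq_smul_add_const
      (fun i : Fin 7 => if i.val = 0 then 0 else 1) 0 (by norm_num)
    intro i j
    fin_cases i <;> fin_cases j <;>
      simp (config := { decide := true }) [hE1] <;> ring
  have h2 : (E1.updateRow 6 (∑ k, ((fun k : Fin 7 => if k.val = 0 then (0:ℚ)
      else if k.val = 6 then 1 else -1) k) • E1 k)).det = (1:ℚ) • E1.det := by
    rw [Matrix.det_updateRow_sum]
    norm_num [show ((6:Fin 7):ℕ) = 6 from rfl]
  have h2e : E1.updateRow 6 (∑ k, ((fun k : Fin 7 => if k.val = 0 then (0:ℚ)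
      else if k.val = 6 then 1 else -1) k) • E1 k) = E2 := by
    ext i j
    fin_cases i <;> fin_cases j <;>
      simp (config := { decide := true }) [hE1, hE2, Matrix.updateRow_apply,
        Fin.sum_univ_seven] <;> ring
  have h3 : (E2.updateCol 0 (fun k => ∑ i, ((fun i : Fin 7 => if i.val = 6 then (0:ℚ)
      else 1) i) • E2 k i)).det = (1:ℚ) • E2.det := by
    rw [Matrix.det_updateCol_sum]
    norm_num [show ((0:Fin 7):ℕ) = 0 from rfl]
  have h3e : E2.updateCol 0 (fun k => ∑ i, ((fun i : Fin 7 => if i.val = 6 then (0:ℚ)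
      else 1) i) • E2 k i) = Matrix.of fun i j : Fin 7 =>
      if i.val = 0 then (if j.val = 0 then y + 5*z else if j.val = 6 then w else z)
      else if i.val = 6 then (if j.val = 0 then 5*(y-z) else if j.val = 6 then v - w else 0)
      else if j.val = i.val then y - z else 0 := by
    ext i j
    fin_cases i <;> fin_cases j <;>
      simp (config := { decide := true }) [hE2, Matrix.updateCol_apply,
        Fin.sum_univ_seven] <;> ring
  rw [h1, ← one_smul ℚ E1.det, ← h2, h2e, ← one_smul ℚ E2.det, ← h3, h3e, detG]



/-- The determinant of the 7×7 base-change matrix recording the coordinates of the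
classes `[P_i] = α[D_i] + λ[B_2] + μ[B_3]` on `[Δ_{17}],…,[Δ_{67}]` and `H` equals
`−(5α)^6 (18α + 63λ − 35μ)`.  Rows/columns `0,…,5` correspond to `1,…,6` and index `6`
corresponds to `7`. -/
theorem basis_change_det_M07 (a l m x : ℚ) (hx : x = -4*a - 9*l + 5*m) :
    Matrix.det (Matrix.of fun i j : Fin 7 =>
        if i.val < 6 then
          (if j.val < 6 then (if i = j then x + 5*a else x) else -5*(x + a))
        else
          (if j.val < 6 then x + 5*a else -5*(x + 4*a))) =
      -(5*a)^6 * (18*a + 63*l - 35*m) := by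
  rw [reduceM (x + 5*a) x (-5*(x + a)) (-5*(x + 4*a))]
  subst hx
  ring
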